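/- For f : {-1,1}^n → {-1,1} with p-smoothed version f̃ and any coordinate i: E_x[|f̃(x) − f̃(x^{∼i})|] ≤ sqrt(4·Score_i(f,p)/p), where x is uniform and x^{∼i} is x with coordinate i rerandomized. -/

import Mathlib

open Finset

attribute [local instance] Classical.propDecidable

namespace DTR

noncomputable section

/-- ±1 real value of a Boolean. -/
def toR (b : Bool) : ℝ := if b then 1 else -1

/-- Average (expectation under the uniform distribution) of a real-valued
function on `{-1,1}^n` (encoded as `Fin n → Bool`). -/
def avg (n : ℕ) (g : (Fin n → Bool) → ℝ) : ℝ := (∑ x : Fin n → Bool, g x) / 2 ^ n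

/-- Mean `E[f]` of a ±1-valued Boolean function. -/
def mean (n : ℕ) (f : (Fin n → Bool) → Bool) : ℝ := avg n fun x => toR (f x)

/-- Sign of a real number, as ±1 (with sign(0) = 1). -/
def sgn (e : ℝ) : ℝ := if 0 ≤ e then 1 else -1

/-- Normalized Hamming distance `Pr_x[f(x) ≠ g(x)]` under the uniform distribution. -/
def distB (n : ℕ) (f g : (Fin n → Bool) → Bool) : ℝ :=
  avg n fun x => if f x = g x then 0 else 1

/-- The `p`-noisy copy of `x` determined by the rerandomization pattern `r`
(coordinates where `r i = true` are rerandomized) and fresh bits `z`. -/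
def noisy (n : ℕ) (x r z : Fin n → Bool) : Fin n → Bool := fun i => if r i then z i else x i

/-- Probability of the rerandomization pattern `r` at noise rate `p`. -/
def wt (n : ℕ) (p : ℝ) (r : Fin n → Bool) : ℝ := ∏ i : Fin n, (if r i then p else 1 - p)

/-- Noise sensitivity `NS_p(f) = Pr[f(x) ≠ f(y)]`, `x` uniform, `y` a `p`-noisy copy of `x`. -/
def NS (n : ℕ) (p : ℝ) (f : (Fin n → Bool) → Bool) : ℝ :=
  (∑ x : Fin n → Bool, ∑ r : Fin n → Bool, ∑ z : Fin n → Bool,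
      wt n p r * (if f x = f (noisy n x r z) then 0 else 1)) / (2 ^ n * 2 ^ n)

/-- Restriction `f_{x_i = b}` of `f`, fixing coordinate `i` to `b`. -/
def restr (n : ℕ) (f : (Fin n → Bool) → Bool) (i : Fin n) (b : Bool) :
    (Fin n → Bool) → Bool := fun x => f (Function.update x i b)

/-- `Score_i(f,p) = NS_p(f) − E_b[NS_p(f_{x_i=b})]`. -/
def score (n : ℕ) (p : ℝ) (f : (Fin n → Bool) → Bool) (i : Fin n) : ℝ :=
  NS n p f - (NS n p (restr n f i true) + NS n p (restr n f i false)) / 2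

/-- Discrete derivative `D_i g(x) = (g(x^{i=1}) − g(x^{i=-1}))/2` of a real-valued function. -/
def Dder (n : ℕ) (g : (Fin n → Bool) → ℝ) (i : Fin n) (x : Fin n → Bool) : ℝ :=
  (g (Function.update x i true) - g (Function.update x i false)) / 2

/-- `p`-smoothed version `f̃(x) = E_{y ∼_p x}[f(y)]` of a Boolean function `f`. -/
def smooth (n : ℕ) (p : ℝ) (f : (Fin n → Bool) → Bool) (x : Fin n → Bool) : ℝ :=
  (∑ r : Fin n → Bool, ∑ z : Fin n → Bool, wt n p r * toR (f (noisy n x r z))) / 2 ^ n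

/-- Fourier coefficient `f̂(S) = E[f(x) · χ_S(x)]`. -/
def fourier (n : ℕ) (f : (Fin n → Bool) → Bool) (S : Finset (Fin n)) : ℝ :=
  avg n fun x => toR (f x) * ∏ i ∈ S, toR (x i)

/-- Total influence `Inf(g) = Σ_i Pr[g(x) ≠ g(x^{⊕i})]`. -/
def totalInf (n : ℕ) (g : (Fin n → Bool) → Bool) : ℝ :=
  ∑ i : Fin n, avg n fun x => if g x = g (Function.update x i (!x i)) then 0 else 1

/-- Decision trees over `{-1,1}^n`. -/
inductive DTree (n : ℕ) where
  | leaf : Bool → DTree n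
  | node : Fin n → DTree n → DTree n → DTree n

namespace DTree

def eval {n : ℕ} : DTree n → (Fin n → Bool) → Bool
  | .leaf b, _ => b
  | .node i l r, x => if x i then eval r x else eval l x

/-- Number of leaves (the size of the tree). -/
def leaves {n : ℕ} : DTree n → ℕ
  | .leaf _ => 1
  | .node _ l r => leaves l + leaves r

/-- Depth of the leaf reached by input `x`. -/
def depthOn {n : ℕ} : DTree n → (Fin n → Bool) → ℕ
  | .leaf _, _ => 0
  | .node i l r, x => (if x i then depthOn r x else depthOn l x) + 1

/-- Whether the tree queries variable `i` on input `x`. -/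
def queries {n : ℕ} : DTree n → (Fin n → Bool) → Fin n → Bool
  | .leaf _, _, _ => false
  | .node j l r, x, i => (i == j) || (if x j then queries r x i else queries l x i)

/-- The tree never re-queries a variable already queried on the path
(given the set `s` of forbidden variables). -/
def noRepeat {n : ℕ} : DTree n → Finset (Fin n) → Prop
  | .leaf _, _ => True
  | .node i l r, s => i ∉ s ∧ noRepeat l (insert i s) ∧ noRepeat r (insert i s)

def depth {n : ℕ} : DTree n → ℕ
  | .leaf _ => 0
  | .node _ l r => max (depth l) (depth r) + 1

end DTree

/-- `opt_s(g)`: distance of `g` to the closest decision tree of size at most `s`. -/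
def opt (n : ℕ) (s : ℕ) (g : (Fin n → Bool) → Bool) : ℝ :=
  sInf {e : ℝ | ∃ T : DTree n, T.leaves ≤ s ∧ distB n g T.eval = e}


section Stmt9Aux

variable {n : ℕ}

lemma toR_mul_self (b : Bool) : toR b * toR b = 1 := by cases b <;> norm_num [toR]

lemma noisy_noisy (x r z z' : Fin n → Bool) :
    noisy n (noisy n x r z) r z' = noisy n x r z' := by
  funext j; by_cases h : r j <;> simp [noisy, h]

lemma noisy_update_x (x r z : Fin n → Bool) (i : Fin n) (b : Bool) :
    noisy n (Function.update x i b) r z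
      = Function.update (noisy n x r z) i (if r i then z i else b) := by
  funext j
  rcases eq_or_ne j i with rfl | hj
  · by_cases h : r j <;> simp [noisy, h]
  · simp [noisy, Function.update_of_ne hj]

lemma noisy_update_z (x r z : Fin n → Bool) (i : Fin n) (c : Bool) :
    noisy n x r (Function.update z i c)
      = Function.update (noisy n x r z) i (if r i then c else x i) := by
  funext j
  rcases eq_or_ne j i with rfl | hj
  · by_cases h : r j <;> simp [noisy, h]
  · simp [noisy, Function.update_of_ne hj]

lemma noisy_update_r (x r z : Fin n → Bool) (i : Fin n) (b : Bool) :
    noisy n x (Function.update r i b) z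
      = Function.update (noisy n x r z) i (if b then z i else x i) := by
  funext j
  rcases eq_or_ne j i with rfl | hj
  · by_cases h : b <;> simp [noisy, h]
  · simp [noisy, Function.update_of_ne hj]

/-- real-valued version of f -/
def hf (f : (Fin n → Bool) → Bool) : (Fin n → Bool) → ℝ := fun x => toR (f x)

/-- discrete derivative -/
def df (f : (Fin n → Bool) → Bool) (i : Fin n) : (Fin n → Bool) → ℝ :=
  fun x => (hf f (Function.update x i true) - hf f (Function.update x i false)) / 2

/-- average over coordinate i -/
def ef (f : (Fin n → Bool) → Bool) (i : Fin n) : (Fin n → Bool) → ℝ :=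
  fun x => (hf f (Function.update x i true) + hf f (Function.update x i false)) / 2

lemma df_insens (f : (Fin n → Bool) → Bool) (i : Fin n) (x : Fin n → Bool) (b : Bool) :
    df f i (Function.update x i b) = df f i x := by
  simp [df, Function.update_idem]

lemma ef_insens (f : (Fin n → Bool) → Bool) (i : Fin n) (x : Fin n → Bool) (b : Bool) :
    ef f i (Function.update x i b) = ef f i x := by
  simp [ef, Function.update_idem]

lemma hdecomp' (f : (Fin n → Bool) → Bool) (i : Fin n) (x : Fin n → Bool) (b : Bool) :
    hf f (Function.update x i b) = ef f i x + toR b * df f i x := by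
  cases b <;> simp [ef, df, toR] <;> ring

lemma hdecomp (f : (Fin n → Bool) → Bool) (i : Fin n) (x : Fin n → Bool) :
    hf f x = ef f i x + toR (x i) * df f i x := by
  conv_lhs => rw [← Function.update_eq_self i x]
  exact hdecomp' f i x (x i)

/-- the flip-at-i involution as an equiv -/
def flipE (i : Fin n) : (Fin n → Bool) ≃ (Fin n → Bool) where
  toFun x := Function.update x i (!x i)
  invFun x := Function.update x i (!x i)
  left_inv x := by
    funext j
    rcases eq_or_ne j i with rfl | hj
    · simp
    · simp [Function.update_of_ne hj]
  right_inv x := by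
    funext j
    rcases eq_or_ne j i with rfl | hj
    · simp
    · simp [Function.update_of_ne hj]

lemma sum_split (i : Fin n) (F : (Fin n → Bool) → ℝ) :
    ∑ x : Fin n → Bool, F x
      = ∑ x : Fin n → Bool, (if x i then 0 else F x + F (Function.update x i true)) := by
  have h1 : ∑ x : Fin n → Bool, (if x i then F x else (0:ℝ))
      = ∑ x : Fin n → Bool, (if x i then (0:ℝ) else F (Function.update x i true)) := by
    apply Fintype.sum_equiv (flipE i)
    intro x
    by_cases hx : x i
    · have : Function.update x i true = x := by
        rw [← hx]; exact Function.update_eq_self i x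
      simp [flipE, hx, this]
    · simp [flipE, hx]
  calc ∑ x : Fin n → Bool, F x
      = ∑ x : Fin n → Bool, ((if x i then (0:ℝ) else F x) + (if x i then F x else 0)) := by
        apply Finset.sum_congr rfl; intro x _; by_cases hx : x i <;> simp [hx]
    _ = (∑ x : Fin n → Bool, (if x i then (0:ℝ) else F x))
        + ∑ x : Fin n → Bool, (if x i then F x else 0) := Finset.sum_add_distrib
    _ = (∑ x : Fin n → Bool, (if x i then (0:ℝ) else F x))
        + ∑ x : Fin n → Bool, (if x i then (0:ℝ) else F (Function.update x i true)) := by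
        rw [h1]
    _ = _ := by
        rw [← Finset.sum_add_distrib]
        apply Finset.sum_congr rfl; intro x _; by_cases hx : x i <;> simp [hx]

lemma sum_vanish (i : Fin n) (G : (Fin n → Bool) → ℝ)
    (hG : ∀ x b, G (Function.update x i b) = G x) :
    ∑ x : Fin n → Bool, toR (x i) * G x = 0 := by
  rw [sum_split i]
  apply Finset.sum_eq_zero
  intro x _
  by_cases hx : x i
  · simp [hx]
  · simp only [hx, if_false, Function.update_self, hG, Bool.false_eq_true]
    simp only [toR]
    norm_num

/-- weight with coordinate i removed -/
def wtR (p : ℝ) (i : Fin n) (r : Fin n → Bool) : ℝ :=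
  ∏ j ∈ Finset.univ.erase i, (if r j then p else 1 - p)

lemma wt_eq (p : ℝ) (i : Fin n) (r : Fin n → Bool) :
    wt n p r = (if r i then p else 1 - p) * wtR p i r :=
  (Finset.mul_prod_erase Finset.univ _ (Finset.mem_univ i)).symm

lemma wtR_update (p : ℝ) (i : Fin n) (r : Fin n → Bool) (b : Bool) :
    wtR p i (Function.update r i b) = wtR p i r := by
  apply Finset.prod_congr rfl
  intro j hj
  rw [Function.update_of_ne (Finset.ne_of_mem_erase hj)]

lemma wt_nonneg (p : ℝ) (hp0 : 0 ≤ p) (hp1 : p ≤ 1) (r : Fin n → Bool) :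
    0 ≤ wt n p r := by
  apply Finset.prod_nonneg
  intro j _
  by_cases h : r j <;> simp [h] <;> linarith

lemma sum_wt_one (p : ℝ) : ∑ r : Fin n → Bool, wt n p r = 1 := by
  have h := Finset.prod_univ_sum (fun _ : Fin n => (Finset.univ : Finset Bool))
      (fun (_ : Fin n) (b : Bool) => if b then p else 1 - p)
  rw [Fintype.piFinset_univ] at h
  simp only [wt]
  rw [← h]
  have hb : (∑ b : Bool, if b then p else 1 - p) = 1 := by rw [Fintype.sum_bool]; norm_num
  rw [Finset.prod_congr rfl (fun j _ => hb), Finset.prod_const_one]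

lemma pairing (p : ℝ) (i : Fin n) (H : (Fin n → Bool) → ℝ)
    (hH : ∀ r b, H (Function.update r i b) = H r) :
    ∑ r : Fin n → Bool, wt n p r * (if r i then 0 else H r)
      = (1 - p) * ∑ r : Fin n → Bool, wt n p r * H r := by
  rw [sum_split i (fun r => wt n p r * H r), Finset.mul_sum,
      sum_split i (fun r => wt n p r * (if r i then 0 else H r))]
  apply Finset.sum_congr rfl
  intro r _
  by_cases hr : r i
  · simp [hr]
  · simp only [hr, if_false, Function.update_self, if_true, Bool.false_eq_true, mul_zero,
      add_zero, hH]
    rw [wt_eq p i r, wt_eq p i (Function.update r i true)]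
    simp only [Function.update_self, if_true, hr, Bool.false_eq_true, if_false,
      wtR_update]
    ring

/-- swap involution for the noise projection -/
def swapE (r : Fin n → Bool) :
    ((Fin n → Bool) × (Fin n → Bool)) ≃ ((Fin n → Bool) × (Fin n → Bool)) where
  toFun q := (noisy n q.1 r q.2, noisy n q.2 r q.1)
  invFun q := (noisy n q.1 r q.2, noisy n q.2 r q.1)
  left_inv q := by
    obtain ⟨x, z⟩ := q
    simp only [Prod.mk.injEq]
    constructor <;> (funext j; by_cases h : r j <;> simp [noisy, h])
  right_inv q := by
    obtain ⟨x, z⟩ := q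
    simp only [Prod.mk.injEq]
    constructor <;> (funext j; by_cases h : r j <;> simp [noisy, h])

lemma sum_noisy (r : Fin n → Bool) (F : (Fin n → Bool) → ℝ) :
    ∑ x : Fin n → Bool, ∑ z : Fin n → Bool, F (noisy n x r z)
      = 2 ^ n * ∑ x : Fin n → Bool, F x := by
  have h0 : ∑ x : Fin n → Bool, ∑ z : Fin n → Bool, F (noisy n x r z)
      = ∑ q : (Fin n → Bool) × (Fin n → Bool), F (noisy n q.1 r q.2) :=
    (Fintype.sum_prod_type (fun q : (Fin n → Bool) × (Fin n → Bool) => F (noisy n q.1 r q.2))).symm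
  have h1 : ∑ q : (Fin n → Bool) × (Fin n → Bool), F (noisy n q.1 r q.2)
      = ∑ q : (Fin n → Bool) × (Fin n → Bool), F q.1 :=
    Fintype.sum_equiv (swapE r) _ _ (fun q => rfl)
  have h2 : ∑ q : (Fin n → Bool) × (Fin n → Bool), F q.1
      = ∑ x : Fin n → Bool, ∑ _z : Fin n → Bool, F x :=
    Fintype.sum_prod_type (fun q : (Fin n → Bool) × (Fin n → Bool) => F q.1)
  have h3 : ∀ x : Fin n → Bool, ∑ _z : Fin n → Bool, F x = 2 ^ n * F x := by
    intro x
    rw [Finset.sum_const, Finset.card_univ, Fintype.card_fun, nsmul_eq_mul]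
    push_cast
    simp
  rw [h0, h1, h2, Finset.sum_congr rfl (fun x _ => h3 x), Finset.mul_sum]

lemma proj (r : Fin n → Bool) (g : (Fin n → Bool) → ℝ) :
    ∑ x : Fin n → Bool, (∑ z : Fin n → Bool, g (noisy n x r z)) ^ 2
      = 2 ^ n * ∑ x : Fin n → Bool, (∑ z : Fin n → Bool, g (noisy n x r z)) * g x := by
  have hVinv : ∀ x z0, (∑ z : Fin n → Bool, g (noisy n (noisy n x r z0) r z))
      = ∑ z : Fin n → Bool, g (noisy n x r z) := by
    intro x z0; apply Finset.sum_congr rfl; intro z _; rw [noisy_noisy]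
  have key := sum_noisy r (fun y => (∑ z : Fin n → Bool, g (noisy n y r z)) * g y)
  calc ∑ x : Fin n → Bool, (∑ z : Fin n → Bool, g (noisy n x r z)) ^ 2
      = ∑ x : Fin n → Bool, ∑ z : Fin n → Bool,
          (∑ z' : Fin n → Bool, g (noisy n x r z')) * g (noisy n x r z) := by
        apply Finset.sum_congr rfl; intro x _; rw [pow_two, ← Finset.mul_sum]
    _ = ∑ x : Fin n → Bool, ∑ z : Fin n → Bool,
          (∑ z' : Fin n → Bool, g (noisy n (noisy n x r z) r z')) * g (noisy n x r z) := by
        apply Finset.sum_congr rfl; intro x _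
        apply Finset.sum_congr rfl; intro z _
        rw [hVinv]
    _ = 2 ^ n * ∑ x : Fin n → Bool, (∑ z : Fin n → Bool, g (noisy n x r z)) * g x := key

/-- triple sum -/
def T3 (F : (Fin n → Bool) → (Fin n → Bool) → (Fin n → Bool) → ℝ) : ℝ :=
  ∑ x : Fin n → Bool, ∑ r : Fin n → Bool, ∑ z : Fin n → Bool, F x r z

lemma T3_add (F G : (Fin n → Bool) → (Fin n → Bool) → (Fin n → Bool) → ℝ) :
    T3 (fun x r z => F x r z + G x r z) = T3 F + T3 G := by
  simp only [T3, Finset.sum_add_distrib]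

lemma T3_mul (c : ℝ) (F : (Fin n → Bool) → (Fin n → Bool) → (Fin n → Bool) → ℝ) :
    T3 (fun x r z => c * F x r z) = c * T3 F := by
  simp only [T3, Finset.mul_sum]

lemma T3_congr (F G : (Fin n → Bool) → (Fin n → Bool) → (Fin n → Bool) → ℝ)
    (h : ∀ x r z, F x r z = G x r z) : T3 F = T3 G := by
  simp only [T3, h]

lemma T3_rot (F : (Fin n → Bool) → (Fin n → Bool) → (Fin n → Bool) → ℝ) :
    T3 F = ∑ r : Fin n → Bool, ∑ z : Fin n → Bool, ∑ x : Fin n → Bool, F x r z := by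
  rw [T3, Finset.sum_comm]
  apply Finset.sum_congr rfl; intro r _
  rw [Finset.sum_comm]

/-- correlation sum -/
def Af (p : ℝ) (g : (Fin n → Bool) → Bool) : ℝ :=
  T3 (fun x r z => wt n p r * (toR (g x) * toR (g (noisy n x r z))))

lemma indicator_eq (a b : Bool) : (if a = b then (0:ℝ) else 1) = (1 - toR a * toR b) / 2 := by
  cases a <;> cases b <;> norm_num [toR]

lemma sum_wt3 (p : ℝ) :
    T3 (fun (_ : Fin n → Bool) (r : Fin n → Bool) (_ : Fin n → Bool) => wt n p r)
      = (2:ℝ) ^ n * 2 ^ n := by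
  have hz : ∀ r : Fin n → Bool, (∑ _z : Fin n → Bool, wt n p r) = (2:ℝ) ^ n * wt n p r := by
    intro r
    rw [Finset.sum_const, Finset.card_univ, Fintype.card_fun, nsmul_eq_mul]
    push_cast; simp
  have h1 : (∑ r : Fin n → Bool, ∑ _z : Fin n → Bool, wt n p r) = (2:ℝ) ^ n := by
    rw [Finset.sum_congr rfl (fun r _ => hz r), ← Finset.mul_sum, sum_wt_one, mul_one]
  rw [T3, Finset.sum_congr rfl (fun (x : Fin n → Bool) _ => h1), Finset.sum_const,
    Finset.card_univ, Fintype.card_fun, nsmul_eq_mul]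
  push_cast [Fintype.card_bool, Fintype.card_fin]
  ring

lemma NS_eq (p : ℝ) (g : (Fin n → Bool) → Bool) :
    NS n p g = ((2:ℝ) ^ n * 2 ^ n - Af p g) / (2 ^ n * 2 ^ n * 2) := by
  have key : T3 (fun x r z => wt n p r * (if g x = g (noisy n x r z) then (0:ℝ) else 1))
      = ((2:ℝ) ^ n * 2 ^ n - Af p g) / 2 := by
    have hpt : ∀ x r z : Fin n → Bool,
        wt n p r * (if g x = g (noisy n x r z) then (0:ℝ) else 1)
          = (wt n p r - wt n p r * (toR (g x) * toR (g (noisy n x r z)))) / 2 := by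
      intro x r z
      rw [indicator_eq]
      ring
    rw [T3_congr _ _ hpt]
    have hsplit : ∀ x r z : Fin n → Bool,
        (wt n p r - wt n p r * (toR (g x) * toR (g (noisy n x r z)))) / 2
          = wt n p r / 2 + (-(1:ℝ)/2) * (wt n p r * (toR (g x) * toR (g (noisy n x r z)))) := by
      intro x r z; ring
    rw [T3_congr _ _ hsplit, T3_add, T3_mul]
    have hhalf : ∀ x r z : Fin n → Bool, wt n p r / 2 = (1/2:ℝ) * wt n p r := by
      intro x r z; ring
    rw [T3_congr _ _ hhalf, T3_mul, sum_wt3]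
    show (1/2:ℝ) * ((2:ℝ)^n * 2^n) + (-(1:ℝ)/2) * Af p g = _
    ring
  show (∑ x : Fin n → Bool, ∑ r : Fin n → Bool, ∑ z : Fin n → Bool,
      wt n p r * (if g x = g (noisy n x r z) then (0:ℝ) else 1)) / ((2:ℝ) ^ n * 2 ^ n) = _
  rw [show (∑ x : Fin n → Bool, ∑ r : Fin n → Bool, ∑ z : Fin n → Bool,
      wt n p r * (if g x = g (noisy n x r z) then (0:ℝ) else 1))
    = T3 (fun x r z => wt n p r * (if g x = g (noisy n x r z) then (0:ℝ) else 1)) from rfl]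
  rw [key]
  ring

/-- the main quadratic form -/
def DD (p : ℝ) (f : (Fin n → Bool) → Bool) (i : Fin n) : ℝ :=
  ∑ r : Fin n → Bool, wt n p r *
    (∑ z : Fin n → Bool, ∑ x : Fin n → Bool, df f i x * df f i (noisy n x r z))

lemma T3dd_eq (p : ℝ) (f : (Fin n → Bool) → Bool) (i : Fin n) :
    T3 (fun x r z => wt n p r * (df f i x * df f i (noisy n x r z))) = DD p f i := by
  rw [T3_rot]
  unfold DD
  apply Finset.sum_congr rfl; intro r _
  rw [Finset.mul_sum]
  apply Finset.sum_congr rfl; intro z _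
  rw [Finset.mul_sum]

lemma Af_restr (p : ℝ) (f : (Fin n → Bool) → Bool) (i : Fin n) (b : Bool) :
    Af p (restr n f i b)
      = T3 (fun x r z => wt n p r * (ef f i x * ef f i (noisy n x r z)))
        + toR b * T3 (fun x r z => wt n p r * (ef f i x * df f i (noisy n x r z)))
        + toR b * T3 (fun x r z => wt n p r * (df f i x * ef f i (noisy n x r z)))
        + DD p f i := by
  rw [← T3dd_eq p f i]
  unfold Af
  have hpt : ∀ x r z : Fin n → Bool,
      wt n p r * (toR (restr n f i b x) * toR (restr n f i b (noisy n x r z)))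
        = wt n p r * (ef f i x * ef f i (noisy n x r z))
          + (toR b * (wt n p r * (ef f i x * df f i (noisy n x r z)))
            + (toR b * (wt n p r * (df f i x * ef f i (noisy n x r z)))
              + wt n p r * (df f i x * df f i (noisy n x r z)))) := by
    intro x r z
    have h1 : toR (restr n f i b x) = ef f i x + toR b * df f i x := hdecomp' f i x b
    have h2 : toR (restr n f i b (noisy n x r z))
        = ef f i (noisy n x r z) + toR b * df f i (noisy n x r z) := hdecomp' f i _ b
    rw [h1, h2]
    linear_combination (wt n p r * (df f i x * df f i (noisy n x r z))) * toR_mul_self b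
  rw [T3_congr _ _ hpt, T3_add, T3_add, T3_add, T3_mul, T3_mul]
  ring

lemma X1_zero (p : ℝ) (f : (Fin n → Bool) → Bool) (i : Fin n) :
    T3 (fun x r z => wt n p r * (ef f i x * (toR (noisy n x r z i) * df f i (noisy n x r z))))
      = 0 := by
  rw [T3_rot]
  apply Finset.sum_eq_zero
  intro r _
  by_cases hri : r i
  · rw [Finset.sum_comm]
    apply Finset.sum_eq_zero
    intro x _
    have hpt : ∀ z : Fin n → Bool,
        wt n p r * (ef f i x * (toR (noisy n x r z i) * df f i (noisy n x r z)))
          = toR (z i) * (wt n p r * (ef f i x * df f i (noisy n x r z))) := by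
      intro z
      have : noisy n x r z i = z i := by simp [noisy, hri]
      rw [this]; ring
    rw [Finset.sum_congr rfl (fun z _ => hpt z)]
    apply sum_vanish i
    intro z c
    rw [noisy_update_z, df_insens]
  · apply Finset.sum_eq_zero
    intro z _
    have hpt : ∀ x : Fin n → Bool,
        wt n p r * (ef f i x * (toR (noisy n x r z i) * df f i (noisy n x r z)))
          = toR (x i) * (wt n p r * (ef f i x * df f i (noisy n x r z))) := by
      intro x
      have : noisy n x r z i = x i := by simp [noisy, hri]
      rw [this]; ring
    rw [Finset.sum_congr rfl (fun x _ => hpt x)]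
    apply sum_vanish i
    intro x c
    rw [noisy_update_x, df_insens, ef_insens]

lemma X2_zero (p : ℝ) (f : (Fin n → Bool) → Bool) (i : Fin n) :
    T3 (fun x r z => wt n p r * ((toR (x i) * df f i x) * ef f i (noisy n x r z))) = 0 := by
  rw [T3_rot]
  apply Finset.sum_eq_zero
  intro r _
  apply Finset.sum_eq_zero
  intro z _
  have hpt : ∀ x : Fin n → Bool,
      wt n p r * ((toR (x i) * df f i x) * ef f i (noisy n x r z))
        = toR (x i) * (wt n p r * (df f i x * ef f i (noisy n x r z))) := by
    intro x; ring
  rw [Finset.sum_congr rfl (fun x _ => hpt x)]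
  apply sum_vanish i
  intro x c
  rw [noisy_update_x, df_insens, ef_insens]

lemma X3_eq (p : ℝ) (f : (Fin n → Bool) → Bool) (i : Fin n) :
    T3 (fun x r z => wt n p r *
        ((toR (x i) * toR (noisy n x r z i)) * (df f i x * df f i (noisy n x r z))))
      = (1 - p) * DD p f i := by
  rw [T3_rot]
  have hper : ∀ r : Fin n → Bool,
      (∑ z : Fin n → Bool, ∑ x : Fin n → Bool, wt n p r *
          ((toR (x i) * toR (noisy n x r z i)) * (df f i x * df f i (noisy n x r z))))
        = wt n p r * (if r i then 0 else
            (∑ z : Fin n → Bool, ∑ x : Fin n → Bool, df f i x * df f i (noisy n x r z))) := by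
    intro r
    by_cases hri : r i
    · simp only [hri, if_true, mul_zero]
      rw [Finset.sum_comm]
      apply Finset.sum_eq_zero
      intro x _
      have hpt : ∀ z : Fin n → Bool,
          wt n p r * ((toR (x i) * toR (noisy n x r z i)) * (df f i x * df f i (noisy n x r z)))
            = toR (z i) * (wt n p r * (toR (x i) * (df f i x * df f i (noisy n x r z)))) := by
        intro z
        have : noisy n x r z i = z i := by simp [noisy, hri]
        rw [this]; ring
      rw [Finset.sum_congr rfl (fun z _ => hpt z)]
      apply sum_vanish i
      intro z c
      rw [noisy_update_z, df_insens]
    · simp only [hri, Bool.false_eq_true, if_false]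
      rw [Finset.mul_sum]
      apply Finset.sum_congr rfl; intro z _
      rw [Finset.mul_sum]
      apply Finset.sum_congr rfl; intro x _
      have hyy : noisy n x r z i = x i := by simp [noisy, hri]
      rw [hyy]
      linear_combination (wt n p r * (df f i x * df f i (noisy n x r z))) * toR_mul_self (x i)
  rw [Finset.sum_congr rfl (fun r _ => hper r)]
  rw [pairing p i _ (by
    intro r b
    apply Finset.sum_congr rfl; intro z _
    apply Finset.sum_congr rfl; intro x _
    rw [noisy_update_r, df_insens])]
  rfl

lemma Af_f (p : ℝ) (f : (Fin n → Bool) → Bool) (i : Fin n) :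
    Af p f = T3 (fun x r z => wt n p r * (ef f i x * ef f i (noisy n x r z)))
      + (1 - p) * DD p f i := by
  unfold Af
  have hpt : ∀ x r z : Fin n → Bool,
      wt n p r * (toR (f x) * toR (f (noisy n x r z)))
        = wt n p r * (ef f i x * ef f i (noisy n x r z))
          + (wt n p r * (ef f i x * (toR (noisy n x r z i) * df f i (noisy n x r z)))
            + (wt n p r * ((toR (x i) * df f i x) * ef f i (noisy n x r z))
              + wt n p r * ((toR (x i) * toR (noisy n x r z i))
                  * (df f i x * df f i (noisy n x r z))))) := by
    intro x r z
    have h1 : toR (f x) = ef f i x + toR (x i) * df f i x := hdecomp f i x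
    have h2 : toR (f (noisy n x r z))
        = ef f i (noisy n x r z) + toR (noisy n x r z i) * df f i (noisy n x r z) :=
      hdecomp f i (noisy n x r z)
    rw [h1, h2]
    ring
  rw [T3_congr _ _ hpt, T3_add, T3_add, T3_add, X1_zero, X2_zero, X3_eq]
  ring

lemma score_eq (p : ℝ) (f : (Fin n → Bool) → Bool) (i : Fin n) :
    score n p f i = p * DD p f i / (2 * ((2:ℝ) ^ n * 2 ^ n)) := by
  have h2n : ((2:ℝ) ^ n) ≠ 0 := by positivity
  unfold score
  rw [NS_eq p f, NS_eq p (restr n f i true), NS_eq p (restr n f i false),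
    Af_restr p f i true, Af_restr p f i false, Af_f p f i]
  simp only [toR]
  norm_num
  field_simp
  ring

def Uf (p : ℝ) (f : (Fin n → Bool) → Bool) (i : Fin n) (x : Fin n → Bool) : ℝ :=
  ∑ r : Fin n → Bool, wt n p r * ∑ z : Fin n → Bool, df f i (noisy n x r z)

def Wf (p : ℝ) (f : (Fin n → Bool) → Bool) (i : Fin n) (x : Fin n → Bool) : ℝ :=
  ∑ r : Fin n → Bool, ∑ z : Fin n → Bool,
    wt n p r * (if r i then 0 else df f i (noisy n x r z))

lemma smooth_diff (p : ℝ) (f : (Fin n → Bool) → Bool) (i : Fin n) (x : Fin n → Bool)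
    (b : Bool) :
    smooth n p f x - smooth n p f (Function.update x i b)
      = (toR (x i) - toR b) * Wf p f i x / 2 ^ n := by
  have hpt : ∀ r z : Fin n → Bool,
      wt n p r * toR (f (noisy n x r z))
        - wt n p r * toR (f (noisy n (Function.update x i b) r z))
      = (toR (x i) - toR b) * (wt n p r * (if r i then 0 else df f i (noisy n x r z))) := by
    intro r z
    have hbase : toR (f (noisy n (Function.update x i b) r z))
        = hf f (Function.update (noisy n x r z) i (if r i then z i else b)) := by
      rw [noisy_update_x]; rfl
    have h0 : toR (f (noisy n x r z)) = hf f (noisy n x r z) := rfl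
    rw [hbase, h0, hdecomp f i (noisy n x r z), hdecomp' f i (noisy n x r z)]
    by_cases hri : r i
    · have hz : noisy n x r z i = z i := by simp [noisy, hri]
      simp only [hri, if_true, hz]
      ring
    · have hz : noisy n x r z i = x i := by simp [noisy, hri]
      simp only [hri, Bool.false_eq_true, if_false, hz]
      ring
  unfold smooth Wf
  rw [div_sub_div_same]
  congr 1
  rw [← Finset.sum_sub_distrib, Finset.mul_sum]
  apply Finset.sum_congr rfl; intro r _
  rw [← Finset.sum_sub_distrib, Finset.mul_sum]
  apply Finset.sum_congr rfl; intro z _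
  exact hpt r z

lemma Wf_eq (p : ℝ) (f : (Fin n → Bool) → Bool) (i : Fin n) (x : Fin n → Bool) :
    Wf p f i x = (1 - p) * Uf p f i x := by
  unfold Wf
  have hper : ∀ r : Fin n → Bool,
      (∑ z : Fin n → Bool, wt n p r * (if r i then 0 else df f i (noisy n x r z)))
        = wt n p r * (if r i then 0 else ∑ z : Fin n → Bool, df f i (noisy n x r z)) := by
    intro r
    by_cases hri : r i
    · simp [hri]
    · simp only [hri, Bool.false_eq_true, if_false]
      rw [Finset.mul_sum]
  rw [Finset.sum_congr rfl (fun r _ => hper r)]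
  rw [pairing p i _ (by
    intro r b
    apply Finset.sum_congr rfl; intro z _
    rw [noisy_update_r, df_insens])]
  rfl

lemma sum_df_Uf (p : ℝ) (f : (Fin n → Bool) → Bool) (i : Fin n) :
    ∑ x : Fin n → Bool, df f i x * Uf p f i x = DD p f i := by
  unfold Uf DD
  have h1 : ∀ x : Fin n → Bool,
      df f i x * (∑ r : Fin n → Bool, wt n p r * ∑ z : Fin n → Bool, df f i (noisy n x r z))
        = ∑ r : Fin n → Bool, wt n p r * ∑ z : Fin n → Bool,
            df f i x * df f i (noisy n x r z) := by
    intro x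
    rw [Finset.mul_sum]
    apply Finset.sum_congr rfl; intro r _
    rw [Finset.mul_sum, Finset.mul_sum, Finset.mul_sum]
    apply Finset.sum_congr rfl; intro z _
    ring
  rw [Finset.sum_congr rfl (fun x _ => h1 x), Finset.sum_comm]
  apply Finset.sum_congr rfl; intro r _
  rw [← Finset.mul_sum, Finset.sum_comm]

lemma Uf_sq_le (p : ℝ) (hp0 : 0 ≤ p) (hp1 : p ≤ 1) (f : (Fin n → Bool) → Bool) (i : Fin n)
    (x : Fin n → Bool) :
    Uf p f i x ^ 2
      ≤ ∑ r : Fin n → Bool, wt n p r * (∑ z : Fin n → Bool, df f i (noisy n x r z)) ^ 2 := by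
  have key : Uf p f i x = ∑ r : Fin n → Bool,
      Real.sqrt (wt n p r) * (Real.sqrt (wt n p r) * ∑ z : Fin n → Bool, df f i (noisy n x r z)) := by
    unfold Uf
    apply Finset.sum_congr rfl; intro r _
    rw [← mul_assoc, Real.mul_self_sqrt (wt_nonneg p hp0 hp1 r)]
  have key2 : (∑ r : Fin n → Bool, Real.sqrt (wt n p r) ^ 2) = 1 := by
    rw [Finset.sum_congr rfl (fun r _ => Real.sq_sqrt (wt_nonneg p hp0 hp1 r)), sum_wt_one]
  have key3 : (∑ r : Fin n → Bool,
      (Real.sqrt (wt n p r) * ∑ z : Fin n → Bool, df f i (noisy n x r z)) ^ 2)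
        = ∑ r : Fin n → Bool, wt n p r * (∑ z : Fin n → Bool, df f i (noisy n x r z)) ^ 2 := by
    apply Finset.sum_congr rfl; intro r _
    rw [mul_pow, Real.sq_sqrt (wt_nonneg p hp0 hp1 r)]
  calc Uf p f i x ^ 2
      = (∑ r : Fin n → Bool, Real.sqrt (wt n p r)
          * (Real.sqrt (wt n p r) * ∑ z : Fin n → Bool, df f i (noisy n x r z))) ^ 2 := by
        rw [key]
    _ ≤ (∑ r : Fin n → Bool, Real.sqrt (wt n p r) ^ 2)
        * ∑ r : Fin n → Bool,
            (Real.sqrt (wt n p r) * ∑ z : Fin n → Bool, df f i (noisy n x r z)) ^ 2 :=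
        Finset.sum_mul_sq_le_sq_mul_sq _ _ _
    _ = ∑ r : Fin n → Bool, wt n p r * (∑ z : Fin n → Bool, df f i (noisy n x r z)) ^ 2 := by
        rw [key2, key3, one_mul]

lemma sum_Uf_sq_le (p : ℝ) (hp0 : 0 ≤ p) (hp1 : p ≤ 1) (f : (Fin n → Bool) → Bool)
    (i : Fin n) :
    ∑ x : Fin n → Bool, Uf p f i x ^ 2 ≤ 2 ^ n * DD p f i := by
  have step1 : ∑ x : Fin n → Bool, Uf p f i x ^ 2
      ≤ ∑ x : Fin n → Bool, ∑ r : Fin n → Bool,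
          wt n p r * (∑ z : Fin n → Bool, df f i (noisy n x r z)) ^ 2 :=
    Finset.sum_le_sum (fun x _ => Uf_sq_le p hp0 hp1 f i x)
  have step2 : ∑ x : Fin n → Bool, ∑ r : Fin n → Bool,
      wt n p r * (∑ z : Fin n → Bool, df f i (noisy n x r z)) ^ 2
        = 2 ^ n * DD p f i := by
    rw [Finset.sum_comm]
    unfold DD
    rw [Finset.mul_sum]
    apply Finset.sum_congr rfl; intro r _
    rw [← Finset.mul_sum, proj r (df f i)]
    have hsw : ∑ x : Fin n → Bool, (∑ z : Fin n → Bool, df f i (noisy n x r z)) * df f i x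
        = ∑ z : Fin n → Bool, ∑ x : Fin n → Bool, df f i x * df f i (noisy n x r z) := by
      calc ∑ x : Fin n → Bool, (∑ z : Fin n → Bool, df f i (noisy n x r z)) * df f i x
          = ∑ x : Fin n → Bool, ∑ z : Fin n → Bool, df f i x * df f i (noisy n x r z) := by
            apply Finset.sum_congr rfl; intro x _
            rw [Finset.sum_mul]
            apply Finset.sum_congr rfl; intro z _
            ring
        _ = _ := Finset.sum_comm
    rw [hsw]
    ring
  linarith

lemma DD_nonneg (p : ℝ) (hp0 : 0 ≤ p) (hp1 : p ≤ 1) (f : (Fin n → Bool) → Bool)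
    (i : Fin n) : 0 ≤ DD p f i := by
  have h1 := sum_Uf_sq_le p hp0 hp1 f i
  have h2 : (0:ℝ) ≤ ∑ x : Fin n → Bool, Uf p f i x ^ 2 :=
    Finset.sum_nonneg (fun x _ => sq_nonneg _)
  have h3 : (0:ℝ) < 2 ^ n := by positivity
  nlinarith

lemma sum_abs_Uf_sq_le (p : ℝ) (hp0 : 0 ≤ p) (hp1 : p ≤ 1) (f : (Fin n → Bool) → Bool)
    (i : Fin n) :
    (∑ x : Fin n → Bool, |Uf p f i x|) ^ 2 ≤ (2 ^ n * 2 ^ n) * DD p f i := by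
  have h := Finset.sum_mul_sq_le_sq_mul_sq Finset.univ (fun _ : Fin n → Bool => (1:ℝ))
      (fun x => |Uf p f i x|)
  simp only [one_mul, one_pow, sq_abs] at h
  have hcard : (∑ _x : Fin n → Bool, (1:ℝ)) = 2 ^ n := by
    rw [Finset.sum_const, Finset.card_univ, Fintype.card_fun, nsmul_eq_mul]
    push_cast [Fintype.card_bool, Fintype.card_fin]
    ring
  rw [hcard] at h
  have h2 := sum_Uf_sq_le p hp0 hp1 f i
  have h3 : (0:ℝ) < 2 ^ n := by positivity
  nlinarith

end Stmt9Aux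


/-- `E_x[|f̃(x) − f̃(x^{∼i})|] ≤ sqrt(4·Score_i(f,p)/p)`, where
`x^{∼i}` rerandomizes coordinate `i`. -/
theorem stmt9 (n : ℕ) (p : ℝ) (hp0 : 0 < p) (hp1 : p < 1)
    (f : (Fin n → Bool) → Bool) (i : Fin n) :
    (∑ x : Fin n → Bool, ∑ b : Bool,
        |smooth n p f x - smooth n p f (Function.update x i b)|) / (2 ^ n * 2) ≤
      Real.sqrt (4 * score n p f i / p) := by
  have h2n : (0:ℝ) < 2 ^ n := by positivity
  have hp0' : (0:ℝ) ≤ p := le_of_lt hp0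
  have hp1' : p ≤ 1 := le_of_lt hp1
  have h1p : (0:ℝ) ≤ 1 - p := by linarith
  set N : ℝ := 2 ^ n with hN
  set S : ℝ := ∑ x : Fin n → Bool, |Uf p f i x| with hS
  set D : ℝ := DD p f i with hD
  have hSnn : 0 ≤ S := Finset.sum_nonneg (fun x _ => abs_nonneg _)
  have hDnn : 0 ≤ D := DD_nonneg p hp0' hp1' f i
  have hS2 : S ^ 2 ≤ (N * N) * D := sum_abs_Uf_sq_le p hp0' hp1' f i
  -- rewrite the left-hand side
  have hx : ∀ x : Fin n → Bool,
      (∑ b : Bool, |smooth n p f x - smooth n p f (Function.update x i b)|)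
        = (2 * (1 - p) / N) * |Uf p f i x| := by
    intro x
    have habs : ∀ b : Bool, |smooth n p f x - smooth n p f (Function.update x i b)|
        = |toR (x i) - toR b| * ((1 - p) * |Uf p f i x|) / N := by
      intro b
      rw [smooth_diff p f i x b, Wf_eq]
      rw [abs_div, abs_mul, abs_mul, abs_of_nonneg h1p, abs_of_pos h2n]
      try ring
    rw [Fintype.sum_bool, habs true, habs false]
    cases hxi : x i <;> simp [toR, hxi] <;> norm_num <;> try ring
  have hLHS : (∑ x : Fin n → Bool, ∑ b : Bool,
      |smooth n p f x - smooth n p f (Function.update x i b)|) / (2 ^ n * 2)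
        = ((1 - p) * S) / (N * N) := by
    rw [Finset.sum_congr rfl (fun x _ => hx x), ← Finset.mul_sum, ← hS, ← hN]
    field_simp
  rw [hLHS]
  -- rewrite the right-hand side argument
  have harg : 4 * score n p f i / p = 2 * D / (N * N) := by
    rw [score_eq p f i, ← hD, ← hN]
    have hpne : p ≠ 0 := ne_of_gt hp0
    have hNne : N ≠ 0 := ne_of_gt h2n
    field_simp
    ring
  rw [harg]
  have hLnn : 0 ≤ (1 - p) * S / (N * N) :=
    div_nonneg (mul_nonneg h1p hSnn) (by positivity)
  have hRnn : 0 ≤ 2 * D / (N * N) := div_nonneg (by linarith) (by positivity)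
  rw [Real.le_sqrt hLnn hRnn]
  have hsq : ((1 - p) * S / (N * N)) ^ 2 = (1 - p) ^ 2 * S ^ 2 / ((N * N) * (N * N)) := by
    ring
  rw [hsq, div_le_div_iff₀ (by positivity) (by positivity)]
  have hp2 : (1 - p) ^ 2 ≤ 1 := by nlinarith
  have hNN : (0:ℝ) < N * N := by positivity
  nlinarith [mul_le_mul_of_nonneg_right hS2 (le_of_lt hNN), sq_nonneg S,
    mul_nonneg (mul_nonneg hDnn (le_of_lt hNN)) (le_of_lt hNN),
    mul_le_mul_of_nonneg_right hp2 (mul_nonneg (sq_nonneg S) (le_of_lt hNN))]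

end

end DTR
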